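/- arXiv:1410.4538 — 3 statements merged into one kernel-verified Lean document; each statement's English description precedes it below -/
import Mathlib

section
/- Let χ₁ be a primitive Dirichlet character modulo q₁, and let m, n, δ, c be positive integers with gcd(mδ, q₁) = 1 and gcd(q₁, δc) = 1. Then S_{χ₁}(m, nq₁², q₁δc) = conj(χ₁(m)) · χ₁(δc) · τ(χ₁) · S(m, n, δc). -/
open scoped BigOperators

/-- `e(x) = exp(2πix)`. -/
noncomputable def e2 (x : ℝ) : ℂ := Complex.exp (2 * Real.pi * Complex.I * x)

/-- The Kloosterman sum `S(m,n,c)`. -/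
noncomputable def klSum (m n : ℤ) (c : ℕ) : ℂ :=
  ∑ d ∈ (Finset.range c).filter (fun d => Nat.Coprime d c),
    e2 (((m * d + n * (((d : ZMod c)⁻¹).val : ℤ) : ℤ) : ℝ) / c)

/-- The twisted Kloosterman sum `S_χ(m,n,c)` for a Dirichlet character `χ` mod `q₁`. -/
noncomputable def klSumTwist {q₁ : ℕ} (χ : DirichletCharacter ℂ q₁) (m n : ℤ) (c : ℕ) : ℂ :=
  ∑ d ∈ (Finset.range c).filter (fun d => Nat.Coprime d c),
    χ (d : ZMod q₁) * e2 (((m * d + n * (((d : ZMod c)⁻¹).val : ℤ) : ℤ) : ℝ) / c)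

/-- The Gauss sum `τ(χ) = Σ_{a mod q₁} χ(a) e(a/q₁)`. -/
noncomputable def gaussS {q₁ : ℕ} (χ : DirichletCharacter ℂ q₁) : ℂ :=
  ∑ a ∈ Finset.range q₁, χ (a : ZMod q₁) * e2 ((a : ℝ) / q₁)

lemma e2_add (x y : ℝ) : e2 (x + y) = e2 x * e2 y := by
  simp [e2, mul_add, Complex.exp_add]

lemma e2_int (k : ℤ) : e2 (k : ℝ) = 1 := by
  have h := Complex.exp_int_mul_two_pi_mul_I k
  rw [e2, ← h]
  push_cast
  ring_nf

lemma e2_int_add (x : ℝ) (k : ℤ) : e2 (x + k) = e2 x := by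
  rw [e2_add, e2_int, mul_one]

/-- `Ez N x = e((x.val)/N)` for `x : ZMod N`. -/
noncomputable def Ez (N : ℕ) (x : ZMod N) : ℂ := e2 ((x.val : ℝ) / N)

lemma e2_div_congr (N : ℕ) (hN : N ≠ 0) {a b : ℤ} (h : (a : ZMod N) = (b : ZMod N)) :
    e2 ((a : ℝ) / N) = e2 ((b : ℝ) / N) := by
  have hd : (N : ℤ) ∣ a - b := by
    rwa [← ZMod.intCast_zmod_eq_zero_iff_dvd, Int.cast_sub, sub_eq_zero]
  obtain ⟨k, hk⟩ := hd
  have ha : a = b + N * k := by linarith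
  have hNz : (N : ℝ) ≠ 0 := Nat.cast_ne_zero.mpr hN
  have hx : (a : ℝ) / N = (b : ℝ) / N + (k : ℝ) := by
    rw [ha]; push_cast; field_simp
  rw [hx, e2_int_add]

lemma Ez_intCast (N : ℕ) [NeZero N] (a : ℤ) : Ez N ((a : ZMod N)) = e2 ((a : ℝ) / N) := by
  rw [Ez]
  have h : (((((a : ZMod N).val : ℕ) : ℤ)) : ZMod N) = (a : ZMod N) := by
    rw [Int.cast_natCast, ZMod.natCast_zmod_val]
  have h2 := e2_div_congr N (NeZero.ne N) h
  rw [← h2]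
  norm_num

/-- Reindex a sum over coprime residues as a sum over units. -/
lemma sum_filter_coprime (N : ℕ) [NeZero N] (f : ZMod N → ℂ) :
    ∑ d ∈ (Finset.range N).filter (fun d => Nat.Coprime d N), f (d : ZMod N)
      = ∑ u : (ZMod N)ˣ, f ↑u := by
  refine Finset.sum_bij' (fun d hd => ZMod.unitOfCoprime d (Finset.mem_filter.mp hd).2)
    (fun u _ => (u : ZMod N).val) ?_ ?_ ?_ ?_ ?_
  · intro a ha; exact Finset.mem_univ _
  · intro u _
    refine Finset.mem_filter.mpr ⟨Finset.mem_range.mpr (ZMod.val_lt _), ZMod.val_coe_unit_coprime u⟩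
  · intro d hd
    simp only [ZMod.coe_unitOfCoprime]
    exact ZMod.val_cast_of_lt (Finset.mem_range.mp (Finset.mem_filter.mp hd).1)
  · intro u _
    ext
    simp [ZMod.coe_unitOfCoprime, ZMod.natCast_zmod_val]
  · intro d hd
    rw [ZMod.coe_unitOfCoprime]

/-- Reindex a sum over `range N` as a sum over `ZMod N`. -/
lemma sum_range_zmod (N : ℕ) [NeZero N] (f : ZMod N → ℂ) :
    ∑ d ∈ Finset.range N, f (d : ZMod N) = ∑ x : ZMod N, f x := by
  refine Finset.sum_bij' (fun d _ => ((d : ZMod N))) (fun x _ => x.val) ?_ ?_ ?_ ?_ ?_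
  · intro a _; exact Finset.mem_univ _
  · intro x _; exact Finset.mem_range.mpr (ZMod.val_lt _)
  · intro d hd; exact ZMod.val_cast_of_lt (Finset.mem_range.mp hd)
  · intro x _; exact ZMod.natCast_zmod_val x
  · intro d _; rfl

/-- Dropping non-units from a full sum. -/
lemma sum_zmod_units (N : ℕ) [NeZero N] (f : ZMod N → ℂ) (h0 : ∀ x, ¬IsUnit x → f x = 0) :
    ∑ x : ZMod N, f x = ∑ u : (ZMod N)ˣ, f ↑u := by
  classical
  rw [← Finset.sum_filter_of_ne (p := fun x => IsUnit x)
    (fun x _ hx => by by_contra hc; exact hx (h0 x hc))]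
  refine Finset.sum_bij' (fun x hx => (Finset.mem_filter.mp hx).2.unit)
    (fun u _ => ↑u) ?_ ?_ ?_ ?_ ?_
  · intro a _; exact Finset.mem_univ _
  · intro u _; exact Finset.mem_filter.mpr ⟨Finset.mem_univ _, u.isUnit⟩
  · intro x hx; exact (Finset.mem_filter.mp hx).2.unit_spec
  · intro u _; ext; exact IsUnit.unit_spec _
  · intro x hx; rw [IsUnit.unit_spec]

lemma klSum_eq (m n : ℤ) (N : ℕ) [NeZero N] :
    klSum m n N = ∑ u : (ZMod N)ˣ,
      Ez N ((m : ZMod N) * ((u : (ZMod N)ˣ) : ZMod N) + (n : ZMod N) * ((u⁻¹ : (ZMod N)ˣ) : ZMod N)) := by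
  rw [klSum]
  have step : ∀ d ∈ (Finset.range N).filter (fun d => Nat.Coprime d N),
      e2 (((m * d + n * (((d : ZMod N)⁻¹).val : ℤ) : ℤ) : ℝ) / N)
        = (fun x : ZMod N => Ez N ((m : ZMod N) * x + (n : ZMod N) * x⁻¹)) ((d : ZMod N)) := by
    intro d _
    simp only
    have harg : ((m * d + n * (((d : ZMod N)⁻¹).val : ℤ) : ℤ) : ZMod N)
        = (m : ZMod N) * (d : ZMod N) + (n : ZMod N) * ((d : ZMod N))⁻¹ := by
      push_cast
      rw [ZMod.natCast_zmod_val]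
    rw [← harg, Ez_intCast]
  rw [Finset.sum_congr rfl step,
    sum_filter_coprime N (fun x : ZMod N => Ez N ((m : ZMod N) * x + (n : ZMod N) * x⁻¹))]
  refine Finset.sum_congr rfl fun u _ => ?_
  rw [ZMod.inv_coe_unit]

lemma klSumTwist_eq {q N : ℕ} [NeZero N] (hd : q ∣ N) (χ : DirichletCharacter ℂ q) (m n : ℤ) :
    klSumTwist χ m n N = ∑ u : (ZMod N)ˣ,
      χ (ZMod.castHom hd (ZMod q) ((u : (ZMod N)ˣ) : ZMod N)) *
        Ez N ((m : ZMod N) * ((u : (ZMod N)ˣ) : ZMod N) + (n : ZMod N) * ((u⁻¹ : (ZMod N)ˣ) : ZMod N)) := by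
  rw [klSumTwist]
  have step : ∀ d ∈ (Finset.range N).filter (fun d => Nat.Coprime d N),
      χ (d : ZMod q) * e2 (((m * d + n * (((d : ZMod N)⁻¹).val : ℤ) : ℤ) : ℝ) / N)
        = (fun x : ZMod N => χ (ZMod.castHom hd (ZMod q) x) *
            Ez N ((m : ZMod N) * x + (n : ZMod N) * x⁻¹)) ((d : ZMod N)) := by
    intro d _
    simp only
    have harg : ((m * d + n * (((d : ZMod N)⁻¹).val : ℤ) : ℤ) : ZMod N)
        = (m : ZMod N) * (d : ZMod N) + (n : ZMod N) * ((d : ZMod N))⁻¹ := by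
      push_cast
      rw [ZMod.natCast_zmod_val]
    rw [← harg, Ez_intCast, map_natCast (ZMod.castHom hd (ZMod q)) d]
  rw [Finset.sum_congr rfl step,
    sum_filter_coprime N (fun x : ZMod N => χ (ZMod.castHom hd (ZMod q) x) *
      Ez N ((m : ZMod N) * x + (n : ZMod N) * x⁻¹))]
  refine Finset.sum_congr rfl fun u _ => ?_
  rw [ZMod.inv_coe_unit]

lemma gaussS_eq {q : ℕ} [NeZero q] (χ : DirichletCharacter ℂ q) :
    gaussS χ = ∑ u : (ZMod q)ˣ, χ ((u : (ZMod q)ˣ) : ZMod q) * Ez q ((u : (ZMod q)ˣ) : ZMod q) := by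
  rw [gaussS]
  have step : ∀ a ∈ Finset.range q,
      χ (a : ZMod q) * e2 ((a : ℝ) / q)
        = (fun x : ZMod q => χ x * Ez q x) ((a : ZMod q)) := by
    intro a _
    simp only
    have : ((a : ℤ) : ZMod q) = (a : ZMod q) := by push_cast; rfl
    rw [← this, Ez_intCast]
    norm_num
  rw [Finset.sum_congr rfl step, sum_range_zmod q (fun x : ZMod q => χ x * Ez q x)]
  rw [sum_zmod_units q (fun x : ZMod q => χ x * Ez q x)]
  intro x hx
  rw [χ.map_nonunit hx, zero_mul]

lemma Ez_split {q C : ℕ} [NeZero q] [NeZero C] {A B : ℤ} (hbez : (q : ℤ) * A + (C : ℤ) * B = 1)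
    (x : ZMod (q * C)) :
    Ez (q * C) x = Ez q ((B : ZMod q) * ((x.val : ℕ) : ZMod q))
      * Ez C ((A : ZMod C) * ((x.val : ℕ) : ZMod C)) := by
  haveI : NeZero (q * C) := ⟨Nat.mul_ne_zero (NeZero.ne q) (NeZero.ne C)⟩
  have h1 : (B : ZMod q) * ((x.val : ℕ) : ZMod q) = ((B * (x.val : ℤ) : ℤ) : ZMod q) := by
    rw [Int.cast_mul, Int.cast_natCast]
  have h2 : (A : ZMod C) * ((x.val : ℕ) : ZMod C) = ((A * (x.val : ℤ) : ℤ) : ZMod C) := by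
    rw [Int.cast_mul, Int.cast_natCast]
  rw [h1, h2, Ez_intCast, Ez_intCast, Ez]
  have hq : (q : ℝ) ≠ 0 := Nat.cast_ne_zero.mpr (NeZero.ne q)
  have hC : (C : ℝ) ≠ 0 := Nat.cast_ne_zero.mpr (NeZero.ne C)
  have hbezR : (q : ℝ) * (A : ℝ) + (C : ℝ) * (B : ℝ) = 1 := by
    exact_mod_cast congrArg (Int.cast : ℤ → ℝ) hbez
  have key : ∀ r : ℝ, r / ((q : ℝ) * (C : ℝ)) = ((B : ℝ) * r) / q + ((A : ℝ) * r) / C := by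
    intro r
    rw [div_add_div _ _ hq hC, div_eq_div_iff (mul_ne_zero hq hC) (mul_ne_zero hq hC)]
    linear_combination (-(r * ((q : ℝ) * C))) * hbezR
  have e1 : ((B * (x.val : ℤ) : ℤ) : ℝ) = (B : ℝ) * ((x.val : ℕ) : ℝ) := by
    rw [Int.cast_mul, Int.cast_natCast]
  have e2' : ((A * (x.val : ℤ) : ℤ) : ℝ) = (A : ℝ) * ((x.val : ℕ) : ℝ) := by
    rw [Int.cast_mul, Int.cast_natCast]
  have eN : (((q * C : ℕ)) : ℝ) = (q : ℝ) * (C : ℝ) := by rw [Nat.cast_mul]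
  rw [eN, e1, e2', key ((x.val : ℕ) : ℝ), e2_add]

lemma crt_components {q C : ℕ} [NeZero q] [NeZero C] (h : Nat.Coprime q C) (x : ZMod (q * C)) :
    ZMod.chineseRemainder h x = (((x.val : ℕ) : ZMod q), ((x.val : ℕ) : ZMod C)) := by
  haveI : NeZero (q * C) := ⟨Nat.mul_ne_zero (NeZero.ne q) (NeZero.ne C)⟩
  have h1 : ZMod.chineseRemainder h x
      = ZMod.castHom (show Nat.lcm q C ∣ q * C by simp [Nat.lcm_dvd_iff]) (ZMod q × ZMod C) x := rfl
  rw [h1, ZMod.castHom_apply, ← ZMod.natCast_val]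
  rw [Prod.ext_iff]
  constructor
  · exact Prod.fst_natCast _
  · exact Prod.snd_natCast _

/-- Twisted multiplicativity:
`S_{χ₁}(m, nq₁², q₁δc) = conj(χ₁(m)) χ₁(δc) τ(χ₁) S(m,n,δc)` for `(mδ, q₁) = 1` and
`(q₁, δc) = 1`. -/
theorem twisted_multiplicativity_kloosterman
    (q₁ : ℕ) (hq₁ : 0 < q₁) (χ₁ : DirichletCharacter ℂ q₁) (hχ₁ : χ₁.IsPrimitive)
    (m n δ c : ℕ) (hm : 0 < m) (hn : 0 < n) (hδ : 0 < δ) (hc : 0 < c)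
    (hco : Nat.Coprime (m * δ) q₁) (hco' : Nat.Coprime q₁ (δ * c)) :
    klSumTwist χ₁ (m : ℤ) ((n : ℤ) * (q₁ : ℤ) ^ 2) (q₁ * (δ * c)) =
      (starRingEnd ℂ) (χ₁ (m : ZMod q₁)) * χ₁ ((δ * c : ℕ) : ZMod q₁) * gaussS χ₁ *
        klSum (m : ℤ) (n : ℤ) (δ * c) := by
  classical
  set C : ℕ := δ * c with hCdef
  haveI : NeZero q₁ := ⟨hq₁.ne'⟩
  haveI : NeZero C := ⟨Nat.mul_ne_zero hδ.ne' hc.ne'⟩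
  haveI : NeZero (q₁ * C) := ⟨Nat.mul_ne_zero hq₁.ne' (NeZero.ne C)⟩
  have hqC : Nat.Coprime q₁ C := hco'
  set N : ℕ := q₁ * C with hNdef
  set n' : ℤ := (n : ℤ) * (q₁ : ℤ) ^ 2 with hn'def
  -- Bezout coefficients
  set A : ℤ := Nat.gcdA q₁ C with hAdef
  set B : ℤ := Nat.gcdB q₁ C with hBdef
  have hbez : (q₁ : ℤ) * A + (C : ℤ) * B = 1 := by
    have h := Nat.gcd_eq_gcd_ab q₁ C
    rw [Nat.Coprime.gcd_eq_one hqC] at h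
    exact_mod_cast h.symm
  -- units
  have hm_cop : Nat.Coprime m q₁ := Nat.Coprime.coprime_dvd_left (dvd_mul_right m δ) hco
  have hm_unit : IsUnit ((m : ℕ) : ZMod q₁) := (ZMod.isUnit_iff_coprime m q₁).mpr hm_cop
  have hCB : (C : ZMod q₁) * (B : ZMod q₁) = 1 := by
    have h := congrArg (fun t : ℤ => ((t : ZMod q₁))) hbez
    push_cast at h
    rwa [ZMod.natCast_self, zero_mul, zero_add] at h
  have hB_unit : IsUnit ((B : ℤ) : ZMod q₁) :=
    IsUnit.of_mul_eq_one _ ((mul_comm _ _).trans hCB)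
  have hqA : (q₁ : ZMod C) * (A : ZMod C) = 1 := by
    have h := congrArg (fun t : ℤ => ((t : ZMod C))) hbez
    push_cast at h
    rwa [ZMod.natCast_self, zero_mul, add_zero] at h
  have hq_unit : IsUnit ((q₁ : ℕ) : ZMod C) := (ZMod.isUnit_iff_coprime q₁ C).mpr hqC
  set g : (ZMod q₁)ˣ := (hB_unit.mul hm_unit).unit with hgdef
  have hgcoe : (g : ZMod q₁) = (B : ZMod q₁) * ((m : ℕ) : ZMod q₁) := IsUnit.unit_spec _
  set gq : (ZMod C)ˣ := hq_unit.unit with hgqdef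
  have hgqcoe : (gq : ZMod C) = ((q₁ : ℕ) : ZMod C) := IsUnit.unit_spec _
  -- projections
  have valcastq : ∀ y : ZMod N, ((y.val : ℕ) : ZMod q₁) = ZMod.castHom (dvd_mul_right q₁ C) (ZMod q₁) y := by
    intro y; rw [ZMod.natCast_val, ZMod.castHom_apply]
  have valcastC : ∀ y : ZMod N, ((y.val : ℕ) : ZMod C) = ZMod.castHom (dvd_mul_left C q₁) (ZMod C) y := by
    intro y; rw [ZMod.natCast_val, ZMod.castHom_apply]
  -- the CRT equivalence on units
  set e : (ZMod N)ˣ ≃* (ZMod q₁)ˣ × (ZMod C)ˣ :=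
    (Units.mapEquiv (ZMod.chineseRemainder hqC).toMulEquiv).trans MulEquiv.prodUnits with hedef
  have he1 : ∀ w : (ZMod N)ˣ, (((e w).1 : (ZMod q₁)ˣ) : ZMod q₁) = ZMod.castHom (dvd_mul_right q₁ C) (ZMod q₁) ((w : ZMod N)) := by
    intro w
    have h0 : (((e w).1 : (ZMod q₁)ˣ) : ZMod q₁) = ((ZMod.chineseRemainder hqC) ((w : ZMod N))).1 := rfl
    rw [h0, crt_components hqC, valcastq]
  have he2 : ∀ w : (ZMod N)ˣ, (((e w).2 : (ZMod C)ˣ) : ZMod C) = ZMod.castHom (dvd_mul_left C q₁) (ZMod C) ((w : ZMod N)) := by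
    intro w
    have h0 : (((e w).2 : (ZMod C)ˣ) : ZMod C) = ((ZMod.chineseRemainder hqC) ((w : ZMod N))).2 := rfl
    rw [h0, crt_components hqC, valcastC]
  have he1' : ∀ w : (ZMod N)ˣ, ((((e w).1)⁻¹ : (ZMod q₁)ˣ) : ZMod q₁) = ZMod.castHom (dvd_mul_right q₁ C) (ZMod q₁) ((w⁻¹ : (ZMod N)ˣ) : ZMod N) := by
    intro w
    have : (((e w).1)⁻¹ : (ZMod q₁)ˣ) = (e w⁻¹).1 := by rw [map_inv]; rfl
    rw [this, he1]
  have he2' : ∀ w : (ZMod N)ˣ, ((((e w).2)⁻¹ : (ZMod C)ˣ) : ZMod C) = ZMod.castHom (dvd_mul_left C q₁) (ZMod C) ((w⁻¹ : (ZMod N)ˣ) : ZMod N) := by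
    intro w
    have : (((e w).2)⁻¹ : (ZMod C)ˣ) = (e w⁻¹).2 := by rw [map_inv]; rfl
    rw [this, he2]
  -- step 1: rewrite the twisted sum over units
  rw [klSumTwist_eq (dvd_mul_right q₁ C) χ₁ ((m : ℕ) : ℤ) n']
  -- step 2: split via CRT
  have hterm : ∀ w : (ZMod N)ˣ,
      χ₁ (ZMod.castHom (dvd_mul_right q₁ C) (ZMod q₁) ((w : ZMod N))) *
        Ez N (((m : ℤ) : ZMod N) * ((w : ZMod N)) + ((n' : ℤ) : ZMod N) * ((w⁻¹ : (ZMod N)ˣ) : ZMod N))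
      = (fun p : (ZMod q₁)ˣ × (ZMod C)ˣ =>
          (χ₁ ((p.1 : (ZMod q₁)ˣ) : ZMod q₁) *
            Ez q₁ ((B : ZMod q₁) * (((m : ℕ) : ZMod q₁) * ((p.1 : (ZMod q₁)ˣ) : ZMod q₁)))) *
          Ez C ((A : ZMod C) * (((m : ℕ) : ZMod C) * ((p.2 : (ZMod C)ˣ) : ZMod C) +
            ((n' : ℤ) : ZMod C) * (((p.2)⁻¹ : (ZMod C)ˣ) : ZMod C)))) (e.toEquiv w) := by
    intro w
    simp only [MulEquiv.toEquiv_eq_coe, MulEquiv.coe_toEquiv]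
    set x : ZMod N := ((m : ℤ) : ZMod N) * ((w : ZMod N)) + ((n' : ℤ) : ZMod N) * ((w⁻¹ : (ZMod N)ˣ) : ZMod N) with hxdef
    have f1 : ((x.val : ℕ) : ZMod q₁) = ((m : ℕ) : ZMod q₁) * (((e w).1 : (ZMod q₁)ˣ) : ZMod q₁) := by
      rw [valcastq, hxdef, map_add, map_mul, map_mul, map_intCast, map_intCast,
        ← he1 w, ← he1' w]
      have hz : ((n' : ℤ) : ZMod q₁) = 0 := by
        rw [hn'def]; push_cast [ZMod.natCast_self]; ring
      rw [hz, zero_mul, add_zero]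
      push_cast
      ring
    have f2 : ((x.val : ℕ) : ZMod C) = ((m : ℕ) : ZMod C) * (((e w).2 : (ZMod C)ˣ) : ZMod C) +
        ((n' : ℤ) : ZMod C) * ((((e w).2)⁻¹ : (ZMod C)ˣ) : ZMod C) := by
      rw [valcastC, hxdef, map_add, map_mul, map_mul, map_intCast, map_intCast,
        ← he2 w, ← he2' w]
      push_cast
      ring
    have hsplit := Ez_split hbez x
    rw [hsplit, f1, f2, he1 w]
    ring
  rw [Fintype.sum_equiv e.toEquiv _
    (fun p : (ZMod q₁)ˣ × (ZMod C)ˣ =>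
        (χ₁ ((p.1 : (ZMod q₁)ˣ) : ZMod q₁) *
          Ez q₁ ((B : ZMod q₁) * (((m : ℕ) : ZMod q₁) * ((p.1 : (ZMod q₁)ˣ) : ZMod q₁)))) *
        Ez C ((A : ZMod C) * (((m : ℕ) : ZMod C) * ((p.2 : (ZMod C)ˣ) : ZMod C) +
          ((n' : ℤ) : ZMod C) * (((p.2)⁻¹ : (ZMod C)ˣ) : ZMod C)))) hterm]
  -- step 3: factor the double sum
  rw [Fintype.sum_prod_type]
  have hfact : ∀ a : (ZMod q₁)ˣ, ∑ b : (ZMod C)ˣ,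
      (χ₁ ((a : ZMod q₁)) * Ez q₁ ((B : ZMod q₁) * (((m : ℕ) : ZMod q₁) * (a : ZMod q₁)))) *
        Ez C ((A : ZMod C) * (((m : ℕ) : ZMod C) * ((b : (ZMod C)ˣ) : ZMod C) +
          ((n' : ℤ) : ZMod C) * (((b)⁻¹ : (ZMod C)ˣ) : ZMod C)))
      = (χ₁ ((a : ZMod q₁)) * Ez q₁ ((B : ZMod q₁) * (((m : ℕ) : ZMod q₁) * (a : ZMod q₁)))) *
        ∑ b : (ZMod C)ˣ, Ez C ((A : ZMod C) * (((m : ℕ) : ZMod C) * ((b : (ZMod C)ˣ) : ZMod C) +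
          ((n' : ℤ) : ZMod C) * (((b)⁻¹ : (ZMod C)ˣ) : ZMod C))) := by
    intro a; rw [← Finset.mul_sum]
  rw [Finset.sum_congr rfl (fun a _ => hfact a), ← Finset.sum_mul]
  -- the q₁-factor
  have hq_factor : ∑ a : (ZMod q₁)ˣ,
      χ₁ ((a : ZMod q₁)) * Ez q₁ ((B : ZMod q₁) * (((m : ℕ) : ZMod q₁) * (a : ZMod q₁)))
      = (starRingEnd ℂ) (χ₁ ((m : ℕ) : ZMod q₁)) * χ₁ ((C : ℕ) : ZMod q₁) * gaussS χ₁ := by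
    have step1 : ∀ a : (ZMod q₁)ˣ,
        χ₁ ((a : ZMod q₁)) * Ez q₁ ((B : ZMod q₁) * (((m : ℕ) : ZMod q₁) * (a : ZMod q₁)))
        = (fun x : (ZMod q₁)ˣ => χ₁ (((g⁻¹ : (ZMod q₁)ˣ) : ZMod q₁) * (x : ZMod q₁)) * Ez q₁ ((x : ZMod q₁)))
            ((Equiv.mulLeft g) a) := by
      intro a
      simp only [Equiv.coe_mulLeft]
      have h1 : (B : ZMod q₁) * (((m : ℕ) : ZMod q₁) * (a : ZMod q₁)) = ((g * a : (ZMod q₁)ˣ) : ZMod q₁) := by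
        rw [Units.val_mul, hgcoe, mul_assoc]
      have h2 : ((g⁻¹ : (ZMod q₁)ˣ) : ZMod q₁) * ((g * a : (ZMod q₁)ˣ) : ZMod q₁) = (a : ZMod q₁) := by
        rw [← Units.val_mul, inv_mul_cancel_left]
      rw [h1, h2]
    rw [Fintype.sum_equiv (Equiv.mulLeft g) _
      (fun x : (ZMod q₁)ˣ => χ₁ (((g⁻¹ : (ZMod q₁)ˣ) : ZMod q₁) * (x : ZMod q₁)) * Ez q₁ ((x : ZMod q₁))) step1]
    have step2 : ∀ x : (ZMod q₁)ˣ,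
        χ₁ (((g⁻¹ : (ZMod q₁)ˣ) : ZMod q₁) * (x : ZMod q₁)) * Ez q₁ ((x : ZMod q₁))
        = χ₁ ((g⁻¹ : (ZMod q₁)ˣ) : ZMod q₁) * (χ₁ ((x : ZMod q₁)) * Ez q₁ ((x : ZMod q₁))) := by
      intro x; rw [map_mul]; ring
    rw [Finset.sum_congr rfl (fun x _ => step2 x), ← Finset.mul_sum, ← gaussS_eq]
    -- evaluate χ₁(g⁻¹)
    have e1 : χ₁ ((g⁻¹ : (ZMod q₁)ˣ) : ZMod q₁) * (χ₁ ((B : ℤ) : ZMod q₁) * χ₁ ((m : ℕ) : ZMod q₁)) = 1 := by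
      rw [← map_mul, ← map_mul, ← hgcoe, ← Units.val_mul, inv_mul_cancel, Units.val_one, map_one]
    have e3 : χ₁ ((B : ℤ) : ZMod q₁) * χ₁ ((C : ℕ) : ZMod q₁) = 1 := by
      rw [← map_mul, mul_comm ((B : ℤ) : ZMod q₁), hCB, map_one]
    have hnorm : ‖χ₁ ((m : ℕ) : ZMod q₁)‖ = 1 := by
      have h := χ₁.unit_norm_eq_one hm_unit.unit
      rwa [IsUnit.unit_spec] at h
    have e4 : χ₁ ((m : ℕ) : ZMod q₁) * (starRingEnd ℂ) (χ₁ ((m : ℕ) : ZMod q₁)) = 1 := by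
      rw [Complex.mul_conj, Complex.normSq_eq_norm_sq, hnorm]
      norm_num
    have hginv : χ₁ ((g⁻¹ : (ZMod q₁)ˣ) : ZMod q₁)
        = (starRingEnd ℂ) (χ₁ ((m : ℕ) : ZMod q₁)) * χ₁ ((C : ℕ) : ZMod q₁) := by
      calc χ₁ ((g⁻¹ : (ZMod q₁)ˣ) : ZMod q₁)
          = χ₁ ((g⁻¹ : (ZMod q₁)ˣ) : ZMod q₁) *
            ((χ₁ ((B : ℤ) : ZMod q₁) * χ₁ ((C : ℕ) : ZMod q₁)) *
              (χ₁ ((m : ℕ) : ZMod q₁) * (starRingEnd ℂ) (χ₁ ((m : ℕ) : ZMod q₁)))) := by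
            rw [e3, e4]; ring
        _ = (χ₁ ((g⁻¹ : (ZMod q₁)ˣ) : ZMod q₁) * (χ₁ ((B : ℤ) : ZMod q₁) * χ₁ ((m : ℕ) : ZMod q₁))) *
            (χ₁ ((C : ℕ) : ZMod q₁) * (starRingEnd ℂ) (χ₁ ((m : ℕ) : ZMod q₁))) := by ring
        _ = (starRingEnd ℂ) (χ₁ ((m : ℕ) : ZMod q₁)) * χ₁ ((C : ℕ) : ZMod q₁) := by
            rw [e1]; ring
    rw [hginv]
  -- the C-factor
  have hC_factor : klSum ((m : ℕ) : ℤ) ((n : ℕ) : ℤ) C = ∑ b : (ZMod C)ˣ,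
      Ez C ((A : ZMod C) * (((m : ℕ) : ZMod C) * ((b : (ZMod C)ˣ) : ZMod C) +
        ((n' : ℤ) : ZMod C) * (((b)⁻¹ : (ZMod C)ˣ) : ZMod C))) := by
    rw [klSum_eq]
    have step : ∀ w : (ZMod C)ˣ,
        Ez C ((((m : ℕ) : ℤ) : ZMod C) * ((w : ZMod C)) + (((n : ℕ) : ℤ) : ZMod C) * ((w⁻¹ : (ZMod C)ˣ) : ZMod C))
        = (fun b : (ZMod C)ˣ => Ez C ((A : ZMod C) * (((m : ℕ) : ZMod C) * ((b : (ZMod C)ˣ) : ZMod C) +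
            ((n' : ℤ) : ZMod C) * (((b)⁻¹ : (ZMod C)ˣ) : ZMod C)))) ((Equiv.mulLeft gq) w) := by
      intro w
      simp only [Equiv.coe_mulLeft]
      refine congrArg (Ez C) ?_
      have hinv : (((gq * w)⁻¹ : (ZMod C)ˣ) : ZMod C) = ((gq⁻¹ : (ZMod C)ˣ) : ZMod C) * ((w⁻¹ : (ZMod C)ˣ) : ZMod C) := by
        rw [mul_inv, Units.val_mul]
      have hcoe : (((gq * w) : (ZMod C)ˣ) : ZMod C) = ((q₁ : ℕ) : ZMod C) * ((w : ZMod C)) := by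
        rw [Units.val_mul, hgqcoe]
      have t2 : ((q₁ : ℕ) : ZMod C) * ((gq⁻¹ : (ZMod C)ˣ) : ZMod C) = 1 := by
        rw [← hgqcoe, ← Units.val_mul, mul_inv_cancel, Units.val_one]
      have hn'c : ((n' : ℤ) : ZMod C) = ((n : ℕ) : ZMod C) * ((q₁ : ℕ) : ZMod C) ^ 2 := by
        rw [hn'def]; push_cast; ring
      rw [hcoe, hinv, hn'c]
      push_cast
      linear_combination (-(((m : ℕ) : ZMod C) * ((w : ZMod C)) +
          ((n : ℕ) : ZMod C) * ((q₁ : ℕ) : ZMod C) * ((gq⁻¹ : (ZMod C)ˣ) : ZMod C) * ((w⁻¹ : (ZMod C)ˣ) : ZMod C))) * hqA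
        - (((n : ℕ) : ZMod C) * ((w⁻¹ : (ZMod C)ˣ) : ZMod C)) * t2
    exact Fintype.sum_equiv (Equiv.mulLeft gq) _
      (fun b : (ZMod C)ˣ => Ez C ((A : ZMod C) * (((m : ℕ) : ZMod C) * ((b : (ZMod C)ˣ) : ZMod C) +
        ((n' : ℤ) : ZMod C) * (((b)⁻¹ : (ZMod C)ˣ) : ZMod C)))) step
  rw [hq_factor, ← hC_factor]
end

section
/- Let w, C₁, C₂, n be positive integers with gcd(C₁, C₂w) = 1, and let ψ be a Dirichlet character modulo C₂w whose conductor divides w. Then Σ_{D mod C₁C₂w, gcd(D, C₁C₂w)=1} ψ(D) e(−nD/(C₁C₂w)) = r_{C₁}(n) · ψ(C₁) · Σ_{d mod C₂w, gcd(d, C₂w)=1} ψ(d) e(−nd/(C₂w)), where ψ(D) denotes ψ evaluated at D modulo C₂w. -/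
open scoped BigOperators

/-- The Ramanujan sum `r_C(n) = Σ_{d mod C, (d,C)=1} e(−nd/C)`. -/
noncomputable def ramanujanSum (C : ℕ) (n : ℤ) : ℂ :=
  ∑ d ∈ (Finset.range C).filter (fun d => Nat.Coprime d C),
    e2 (((-(n * d) : ℤ) : ℝ) / C)

lemma e2_add_int (x : ℝ) (k : ℤ) : e2 (x + (k : ℝ)) = e2 x := by
  rw [e2_add, e2_int, mul_one]

lemma coprime_mod_iff (m n : ℕ) : (m % n).Coprime n ↔ m.Coprime n := by
  have h : Nat.gcd (m % n) n = Nat.gcd m n := (Nat.gcd_rec n m).symm.trans (Nat.gcd_comm n m)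
  simp [Nat.Coprime, h]

lemma twisted_sum_splitting_key
    (C₁ M n : ℕ) (hC₁ : 0 < C₁) (hM : 0 < M) (hco : Nat.Coprime C₁ M)
    (ψ : DirichletCharacter ℂ M) :
    (∑ D ∈ (Finset.range (C₁ * M)).filter
        (fun D => Nat.Coprime D (C₁ * M)),
      ψ (D : ZMod M) * e2 (((-(n * D : ℕ) : ℤ) : ℝ) / (C₁ * M : ℕ))) =
    ramanujanSum C₁ (n : ℤ) * ψ ((C₁ : ℕ) : ZMod M) *
      ∑ d ∈ (Finset.range M).filter (fun d => Nat.Coprime d M),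
        ψ (d : ZMod M) * e2 (((-(n * d : ℕ) : ℤ) : ℝ) / (M : ℕ)) := by
  haveI : NeZero C₁ := ⟨hC₁.ne'⟩
  haveI : NeZero M := ⟨hM.ne'⟩
  have hN : 0 < C₁ * M := Nat.mul_pos hC₁ hM
  have hdvd₁ : C₁ ∣ C₁ * M := Dvd.intro M rfl
  have hdvd₂ : M ∣ C₁ * M := Dvd.intro_left C₁ rfl
  have huM : IsUnit ((M : ℕ) : ZMod C₁) := (ZMod.isUnit_iff_coprime M C₁).mpr hco.symm
  have huC : IsUnit ((C₁ : ℕ) : ZMod M) := (ZMod.isUnit_iff_coprime C₁ M).mpr hco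
  have huMi : IsUnit ((M : ZMod C₁))⁻¹ :=
    IsUnit.of_mul_eq_one _ (ZMod.inv_mul_of_unit _ huM)
  have huCi : IsUnit ((C₁ : ZMod M))⁻¹ :=
    IsUnit.of_mul_eq_one _ (ZMod.inv_mul_of_unit _ huC)
  -- rewrite RHS as a sum over the product set
  rw [ramanujanSum, Finset.sum_mul, Finset.sum_mul_sum, ← Finset.sum_product']
  symm
  refine Finset.sum_nbij'
    (i := fun p => (p.1 * M + p.2 * C₁) % (C₁ * M))
    (j := fun D => (((D : ZMod C₁) * ((M : ZMod C₁))⁻¹).val,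
                    ((D : ZMod M) * ((C₁ : ZMod M))⁻¹).val))
    ?_ ?_ ?_ ?_ ?_
  · -- forward membership
    rintro ⟨a, d⟩ hp
    simp only [Finset.mem_product, Finset.mem_filter, Finset.mem_range] at hp
    obtain ⟨⟨ha, hac⟩, hd, hdc⟩ := hp
    simp only [Finset.mem_filter, Finset.mem_range]
    refine ⟨Nat.mod_lt _ hN, ?_⟩
    rw [coprime_mod_iff, Nat.coprime_mul_iff_right]
    constructor
    · exact (Nat.coprime_add_mul_right_left (a * M) C₁ d).mpr (Nat.Coprime.mul hac hco.symm)
    · rw [add_comm]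
      exact (Nat.coprime_add_mul_right_left (d * C₁) M a).mpr (Nat.Coprime.mul hdc hco)
  · -- backward membership
    intro D hD
    simp only [Finset.mem_filter, Finset.mem_range] at hD
    obtain ⟨hDlt, hDc⟩ := hD
    rw [Nat.coprime_mul_iff_right] at hDc
    have hu1 : IsUnit ((D : ZMod C₁) * ((M : ZMod C₁))⁻¹) :=
      ((ZMod.isUnit_iff_coprime D C₁).mpr hDc.1).mul huMi
    have hu2 : IsUnit ((D : ZMod M) * ((C₁ : ZMod M))⁻¹) :=
      ((ZMod.isUnit_iff_coprime D M).mpr hDc.2).mul huCi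
    simp only [Finset.mem_product, Finset.mem_filter, Finset.mem_range]
    refine ⟨⟨ZMod.val_lt _, ?_⟩, ZMod.val_lt _, ?_⟩
    · have := ZMod.val_coe_unit_coprime hu1.unit
      rwa [hu1.unit_spec] at this
    · have := ZMod.val_coe_unit_coprime hu2.unit
      rwa [hu2.unit_spec] at this
  · -- left inverse
    rintro ⟨a, d⟩ hp
    simp only [Finset.mem_product, Finset.mem_filter, Finset.mem_range] at hp
    obtain ⟨⟨ha, hac⟩, hd, hdc⟩ := hp
    dsimp only
    have hmod1 : ((((a * M + d * C₁) % (C₁ * M) : ℕ)) : ZMod C₁)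
        = ((a * M + d * C₁ : ℕ) : ZMod C₁) := by
      rw [ZMod.natCast_eq_natCast_iff]
      exact (Nat.mod_modEq _ (C₁ * M)).of_dvd hdvd₁
    have hmod2 : ((((a * M + d * C₁) % (C₁ * M) : ℕ)) : ZMod M)
        = ((a * M + d * C₁ : ℕ) : ZMod M) := by
      rw [ZMod.natCast_eq_natCast_iff]
      exact (Nat.mod_modEq _ (C₁ * M)).of_dvd hdvd₂
    have e1 : ((a * M + d * C₁ : ℕ) : ZMod C₁) = (a : ZMod C₁) * (M : ZMod C₁) := by
      push_cast
      rw [ZMod.natCast_self]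
      ring
    have e2' : ((a * M + d * C₁ : ℕ) : ZMod M) = (d : ZMod M) * (C₁ : ZMod M) := by
      push_cast
      rw [ZMod.natCast_self]
      ring
    have v1 : (((a * M + d * C₁) % (C₁ * M) : ℕ) : ZMod C₁) * ((M : ZMod C₁))⁻¹
        = (a : ZMod C₁) := by
      rw [hmod1, e1, mul_assoc, ZMod.mul_inv_of_unit _ huM, mul_one]
    have v2 : (((a * M + d * C₁) % (C₁ * M) : ℕ) : ZMod M) * ((C₁ : ZMod M))⁻¹
        = (d : ZMod M) := by
      rw [hmod2, e2', mul_assoc, ZMod.mul_inv_of_unit _ huC, mul_one]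
    rw [Prod.ext_iff]
    constructor
    · simpa [v1] using ZMod.val_cast_of_lt ha
    · simpa [v2] using ZMod.val_cast_of_lt hd
  · -- right inverse
    intro D hD
    simp only [Finset.mem_filter, Finset.mem_range] at hD
    obtain ⟨hDlt, hDc⟩ := hD
    dsimp only
    set a := (D : ZMod C₁) * ((M : ZMod C₁))⁻¹ with hadef
    set d := (D : ZMod M) * ((C₁ : ZMod M))⁻¹ with hddef
    have h1 : ((a.val * M + d.val * C₁ : ℕ) : ZMod C₁) = (D : ZMod C₁) := by
      push_cast
      rw [ZMod.natCast_self, mul_zero, add_zero, ZMod.natCast_val, ZMod.cast_id, hadef,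
        mul_assoc, ZMod.inv_mul_of_unit _ huM, mul_one]
    have h2 : ((a.val * M + d.val * C₁ : ℕ) : ZMod M) = (D : ZMod M) := by
      push_cast
      rw [ZMod.natCast_self, mul_zero, zero_add, ZMod.natCast_val, ZMod.cast_id, hddef,
        mul_assoc, ZMod.inv_mul_of_unit _ huC, mul_one]
    have hmc : a.val * M + d.val * C₁ ≡ D [MOD C₁ * M] :=
      (Nat.modEq_and_modEq_iff_modEq_mul hco).mp
        ⟨(ZMod.natCast_eq_natCast_iff _ _ _).mp h1, (ZMod.natCast_eq_natCast_iff _ _ _).mp h2⟩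
    have hmc' : (a.val * M + d.val * C₁) % (C₁ * M) = D % (C₁ * M) := hmc
    rw [hmc', Nat.mod_eq_of_lt hDlt]
  · -- values agree
    rintro ⟨a, d⟩ hp
    simp only [Finset.mem_product, Finset.mem_filter, Finset.mem_range] at hp
    obtain ⟨⟨ha, hac⟩, hd, hdc⟩ := hp
    dsimp only
    set T := a * M + d * C₁ with hTdef
    set t := T / (C₁ * M) with htdef
    set R := T % (C₁ * M) with hRdef
    have hT : C₁ * M * t + R = T := Nat.div_add_mod T (C₁ * M)
    -- character part
    have hψ : ψ ((R : ℕ) : ZMod M) = ψ ((d : ℕ) : ZMod M) * ψ ((C₁ : ℕ) : ZMod M) := by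
      have hmod2 : ((R : ℕ) : ZMod M) = ((T : ℕ) : ZMod M) := by
        rw [ZMod.natCast_eq_natCast_iff, hRdef]
        exact (Nat.mod_modEq _ (C₁ * M)).of_dvd hdvd₂
      have e2' : ((T : ℕ) : ZMod M) = (d : ZMod M) * (C₁ : ZMod M) := by
        rw [hTdef]; push_cast
        rw [ZMod.natCast_self]; ring
      rw [hmod2, e2', map_mul]
    -- exponential part
    have hC₁R : (C₁ : ℝ) ≠ 0 := Nat.cast_ne_zero.mpr hC₁.ne'
    have hMR : (M : ℝ) ≠ 0 := Nat.cast_ne_zero.mpr hM.ne'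
    have hRreal : (R : ℝ) = (T : ℝ) - (C₁ : ℝ) * (M : ℝ) * (t : ℝ) := by
      have : ((C₁ * M * t + R : ℕ) : ℝ) = (T : ℝ) := by rw [hT]
      push_cast at this
      linarith
    have hTreal : (T : ℝ) = (a : ℝ) * (M : ℝ) + (d : ℝ) * (C₁ : ℝ) := by
      rw [hTdef]; push_cast; ring
    have harg : ((-(n * R : ℕ) : ℤ) : ℝ) / ((C₁ * M : ℕ) : ℝ) =
        (((-(n * a : ℕ) : ℤ) : ℝ) / (C₁ : ℕ) + ((-(n * d : ℕ) : ℤ) : ℝ) / (M : ℕ)) +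
          (((n * t : ℕ) : ℤ) : ℝ) := by
      push_cast
      rw [hRreal, hTreal]
      field_simp
      ring
    have hexp : e2 (((-(n * R : ℕ) : ℤ) : ℝ) / ((C₁ * M : ℕ) : ℝ)) =
        e2 (((-(n * a : ℕ) : ℤ) : ℝ) / (C₁ : ℕ)) *
          e2 (((-(n * d : ℕ) : ℤ) : ℝ) / (M : ℕ)) := by
      rw [harg, e2_add_int, e2_add]
    rw [hψ, hexp]
    push_cast
    ring
  done

/-- Splitting of a complete twisted exponential sum along the coprime factorization
`C₁ · C₂w`: for `ψ` mod `C₂w` of conductor dividing `w` and `(C₁, C₂w) = 1`,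
`Σ_{D mod C₁C₂w, (D,C₁C₂w)=1} ψ(D) e(−nD/(C₁C₂w)) = r_{C₁}(n) ψ(C₁) Σ_{d mod C₂w, (d,C₂w)=1} ψ(d) e(−nd/(C₂w))`. -/
theorem twisted_sum_splitting
    (w C₁ C₂ n : ℕ) (hw : 0 < w) (hC₁ : 0 < C₁) (hC₂ : 0 < C₂) (hn : 0 < n)
    (hco : Nat.Coprime C₁ (C₂ * w))
    (ψ : DirichletCharacter ℂ (C₂ * w)) (hcond : ψ.conductor ∣ w) :
    (∑ D ∈ (Finset.range (C₁ * (C₂ * w))).filter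
        (fun D => Nat.Coprime D (C₁ * (C₂ * w))),
      ψ (D : ZMod (C₂ * w)) * e2 (((-(n * D : ℕ) : ℤ) : ℝ) / (C₁ * (C₂ * w) : ℕ))) =
    ramanujanSum C₁ (n : ℤ) * ψ ((C₁ : ℕ) : ZMod (C₂ * w)) *
      ∑ d ∈ (Finset.range (C₂ * w)).filter (fun d => Nat.Coprime d (C₂ * w)),
        ψ (d : ZMod (C₂ * w)) * e2 (((-(n * d : ℕ) : ℤ) : ℝ) / (C₂ * w : ℕ)) := by
  exact twisted_sum_splitting_key C₁ (C₂ * w) n hC₁ (Nat.mul_pos hC₂ hw) hco ψ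
end

section
/- There exists an absolute constant C > 0 such that for every prime q and every integer a with q ∤ a, the function f : (ℤ/qℤ)^× → ℂ given by f(c) = e(ac/q) satisfies |‖f̂‖₁ − q| ≤ C. -/
open scoped BigOperators

/-- The `q`-Mellin transform `f̂(χ) = φ(q)^{-1/2} Σ_{c ∈ (ℤ/qℤ)ˣ} conj(χ(c)) f(c)`. -/
noncomputable def qMellin (q : ℕ) [NeZero q] (f : (ZMod q)ˣ → ℂ)
    (χ : DirichletCharacter ℂ q) : ℂ :=
  ((q.totient : ℝ) ^ (-(1/2) : ℝ) : ℝ) * ∑ c : (ZMod q)ˣ, (starRingEnd ℂ) (χ c) * f c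

/-- `‖f̂‖₁ = Σ_{χ mod q} |f̂(χ)|` (a finite sum, written as a `tsum` over the finite
type of Dirichlet characters mod `q`). -/
noncomputable def qMellinNorm (q : ℕ) [NeZero q] (f : (ZMod q)ˣ → ℂ) : ℝ :=
  ∑' χ : DirichletCharacter ℂ q, ‖qMellin q f χ‖

private lemma conj_gaussSum' {q : ℕ} [NeZero q] (φ : MulChar (ZMod q) ℂ)
    (ψ : AddChar (ZMod q) ℂ) :
    (starRingEnd ℂ) (gaussSum φ ψ) = gaussSum φ⁻¹ ψ⁻¹ := by
  simp only [gaussSum, map_sum, map_mul]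
  refine Finset.sum_congr rfl fun x _ ↦ ?_
  rw [starRingEnd_apply, starRingEnd_apply, MulChar.star_apply',
    AddChar.inv_apply, AddChar.map_neg_eq_conj, starRingEnd_apply]

private lemma abs_gaussSum_eq {q : ℕ} [NeZero q] [Fact q.Prime] {φ : MulChar (ZMod q) ℂ} (hφ : φ ≠ 1)
    {ψ : AddChar (ZMod q) ℂ} (hψ : ψ.IsPrimitive) :
    ‖gaussSum φ ψ‖ = Real.sqrt q := by
  have h := gaussSum_mul_gaussSum_eq_card hφ hψ
  rw [← conj_gaussSum', Complex.mul_conj, ZMod.card] at h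
  have h2 : Complex.normSq (gaussSum φ ψ) = (q : ℝ) := by exact_mod_cast h
  rw [Complex.norm_def, h2]

private lemma sum_units_eq {q : ℕ} [NeZero q] (F : ZMod q → ℂ)
    (hF : ∀ x, ¬ IsUnit x → F x = 0) :
    ∑ u : (ZMod q)ˣ, F u = ∑ x : ZMod q, F x := by
  classical
  have h1 : ∑ x ∈ Finset.univ.map ⟨(Units.val : (ZMod q)ˣ → ZMod q), Units.val_injective⟩, F x
      = ∑ x : ZMod q, F x := by
    refine Finset.sum_subset (Finset.subset_univ _) fun x _ hx ↦ hF x fun hu ↦ hx ?_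
    simp only [Finset.mem_map, Finset.mem_univ, Function.Embedding.coeFn_mk, true_and]
    exact ⟨hu.unit, hu.unit_spec⟩
  rw [Finset.sum_map] at h1
  exact h1

private lemma numeric_bound {n : ℝ} (hn : 2 ≤ n) :
    |((n - 2) * Real.sqrt n + 1) / Real.sqrt (n - 1) - n| ≤ 2 := by
  have ht0 : (1:ℝ) ≤ Real.sqrt (n-1) := by
    have := Real.sqrt_le_sqrt (show (1:ℝ) ≤ n - 1 by linarith)
    simpa using this
  set s := Real.sqrt n with hs
  set t := Real.sqrt (n-1) with htdef
  have hs2 : s^2 = n := Real.sq_sqrt (by linarith)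
  have ht2 : t^2 = n - 1 := Real.sq_sqrt (by linarith)
  have hst : t ≤ s := Real.sqrt_le_sqrt (by linarith)
  have ht : 0 < t := by linarith
  have hs0 : 0 ≤ s := Real.sqrt_nonneg n
  have hsn : s ≤ n := by nlinarith
  rw [abs_le]
  constructor
  · have hlow : n - 2 ≤ ((n - 2) * s + 1) / t := by
      rw [le_div_iff₀ ht]
      nlinarith [mul_le_mul_of_nonneg_left hst (show (0:ℝ) ≤ n - 2 by linarith)]
    linarith
  · rw [sub_le_iff_le_add, div_le_iff₀ ht]
    have key : ((2 + n) * t - ((n - 2) * s + 1)) * (s + t)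
        = 4 * s * t + 3 * n - 2 - s - t := by
      linear_combination (2 + n) * ht2 - (n - 2) * hs2
    have h4 : 0 ≤ 4 * s * t + 3 * n - 2 - s - t := by
      nlinarith [mul_le_mul_of_nonneg_left ht0 hs0]
    have hspos : 0 < s + t := by linarith
    nlinarith [key, h4, hspos]

/-- There is an absolute constant `C > 0` such that for every prime `q` and `q ∤ a`,
the additive-character weight `f(c) = e(ac/q)` has `‖f̂‖₁ = q + O(1)`. -/
theorem qMellinNorm_additive_character :
    ∃ C : ℝ, 0 < C ∧ ∀ (q : ℕ) [NeZero q], q.Prime → ∀ a : ℤ, ¬ ((q : ℤ) ∣ a) →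
      |qMellinNorm q (fun c : (ZMod q)ˣ =>
          e2 (((a * ((c : ZMod q).val : ℤ) : ℤ) : ℝ) / q)) - q| ≤ C := by
  refine ⟨2, by norm_num, ?_⟩
  intro q _ hq a ha
  haveI : Fact q.Prime := ⟨hq⟩
  set b : ZMod q := (a : ZMod q) with hbdef
  have hb0 : b ≠ 0 := by
    rw [hbdef, Ne, ZMod.intCast_zmod_eq_zero_iff_dvd]
    exact ha
  have hbu : IsUnit b := isUnit_iff_ne_zero.mpr hb0
  set f : (ZMod q)ˣ → ℂ := fun c : (ZMod q)ˣ =>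
    e2 (((a * ((c : ZMod q).val : ℤ) : ℤ) : ℝ) / q) with hfdef
  have hf : ∀ c : (ZMod q)ˣ, f c = ZMod.stdAddChar (b * (c : ZMod q)) := by
    intro c
    have hcast : ((a * (((c : ZMod q).val : ℤ)) : ℤ) : ZMod q) = b * (c : ZMod q) := by
      push_cast
      rw [ZMod.natCast_val, ZMod.cast_id]
    show e2 (((a * (((c : ZMod q).val : ℤ)) : ℤ) : ℝ) / q) = _
    rw [← hcast, ZMod.stdAddChar_coe]
    simp only [e2]
    push_cast
    ring_nf
  set ψ : AddChar (ZMod q) ℂ := (ZMod.stdAddChar (N := q)).mulShift b with hψdef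
  have hψ1 : ψ ≠ 1 := ZMod.isPrimitive_stdAddChar q hb0
  have hsum : ∀ χ : DirichletCharacter ℂ q,
      ∑ c : (ZMod q)ˣ, (starRingEnd ℂ) (χ c) * f c = gaussSum χ⁻¹ ψ := by
    intro χ
    rw [gaussSum, ← sum_units_eq (fun x => χ⁻¹ x * ψ x)
      (fun x hx => by show χ⁻¹ x * ψ x = 0; rw [MulChar.map_nonunit _ hx, zero_mul])]
    refine Finset.sum_congr rfl fun u _ ↦ ?_
    rw [hf u, hψdef, AddChar.mulShift_apply, starRingEnd_apply, MulChar.star_apply']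
  -- the trivial character contributes `1`
  have htriv : gaussSum (1 : MulChar (ZMod q) ℂ) ψ = -1 := by
    have h0 : ∑ x : ZMod q, ψ x = 0 := AddChar.sum_eq_zero_of_ne_one hψ1
    rw [gaussSum]
    rw [Finset.sum_eq_sum_sdiff_singleton_add (Finset.mem_univ (0 : ZMod q))]
    rw [MulChar.map_nonunit _ (by simp : ¬ IsUnit (0 : ZMod q)), zero_mul, add_zero]
    have hcong : ∀ x ∈ Finset.univ \ {(0 : ZMod q)},
        (1 : MulChar (ZMod q) ℂ) x * ψ x = ψ x := by
      intro x hx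
      simp only [Finset.mem_sdiff, Finset.mem_univ, Finset.mem_singleton, true_and] at hx
      rw [MulChar.one_apply (isUnit_iff_ne_zero.mpr hx), one_mul]
    rw [Finset.sum_congr rfl hcong]
    have hsplit := Finset.sum_eq_sum_sdiff_singleton_add (Finset.mem_univ (0 : ZMod q)) ψ
    rw [h0, AddChar.map_zero_eq_one] at hsplit
    linear_combination -hsplit
  -- per-character absolute values
  have habs : ∀ χ : DirichletCharacter ℂ q,
      ‖gaussSum χ⁻¹ ψ‖ = if χ = 1 then 1 else Real.sqrt q := by
    intro χ
    rcases eq_or_ne χ 1 with h1 | h1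
    · rw [if_pos h1, h1, inv_one, htriv]
      simp
    · rw [if_neg h1]
      have hinv : χ⁻¹ ≠ 1 := fun h => h1 (by rwa [inv_eq_one] at h)
      have key := gaussSum_mulShift χ⁻¹ (ZMod.stdAddChar (N := q)) hbu.unit
      rw [hbu.unit_spec, ← hψdef] at key
      have habs2 := congrArg (‖·‖) key
      rw [norm_mul] at habs2
      have hn1 : ‖(χ⁻¹ : DirichletCharacter ℂ q) (hbu.unit : (ZMod q)ˣ)‖ = 1 := by
        simpa using DirichletCharacter.unit_norm_eq_one (χ⁻¹ : DirichletCharacter ℂ q) hbu.unit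
      rw [hbu.unit_spec] at hn1
      rw [hn1, one_mul] at habs2
      rw [habs2, abs_gaussSum_eq hinv (ZMod.isPrimitive_stdAddChar q)]
  set r : ℝ := ((q.totient : ℝ) ^ (-(1/2) : ℝ) : ℝ) with hr
  have hr0 : 0 ≤ r := Real.rpow_nonneg (Nat.cast_nonneg _) _
  have hM : ∀ χ : DirichletCharacter ℂ q,
      ‖qMellin q f χ‖ = r * (if χ = 1 then 1 else Real.sqrt q) := by
    intro χ
    rw [qMellin, hsum χ, norm_mul, Complex.norm_real, Real.norm_eq_abs, abs_of_nonneg hr0, habs χ]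
  have hcardχ : Fintype.card (DirichletCharacter ℂ q) = q.totient := by
    rw [← Nat.card_eq_fintype_card]
    exact DirichletCharacter.card_eq_totient_of_hasEnoughRootsOfUnity ℂ q
  have hnorm : qMellinNorm q f
      = ((q.totient - 1 : ℕ) : ℝ) * (r * Real.sqrt q) + r := by
    rw [qMellinNorm, tsum_fintype]
    rw [Finset.sum_congr rfl (fun χ _ => hM χ)]
    rw [Finset.sum_eq_sum_sdiff_singleton_add
      (Finset.mem_univ (1 : DirichletCharacter ℂ q))]
    rw [if_pos rfl, mul_one]
    congr 1
    rw [Finset.sum_congr rfl (fun χ hχ => by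
      rw [if_neg (by simpa using (Finset.mem_sdiff.mp hχ).2)])]
    rw [Finset.sum_const, nsmul_eq_mul]
    congr 2
    rw [Finset.card_sdiff_of_subset (by simp), Finset.card_singleton, Finset.card_univ, hcardχ]
  -- numerics
  have hq2 : 2 ≤ q := hq.two_le
  have htot : q.totient = q - 1 := Nat.totient_prime hq
  have hn2 : (2 : ℝ) ≤ (q : ℝ) := by exact_mod_cast hq2
  have hcast1 : ((q.totient : ℕ) : ℝ) = (q : ℝ) - 1 := by
    rw [htot]
    push_cast [Nat.cast_sub (by omega : 1 ≤ q)]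
    ring
  have hcast2 : (((q.totient - 1 : ℕ)) : ℝ) = (q : ℝ) - 2 := by
    rw [htot]
    have : q - 1 - 1 = q - 2 := by omega
    rw [this, Nat.cast_sub (by omega : 2 ≤ q)]
    norm_num
  have hrval : r = (Real.sqrt ((q : ℝ) - 1))⁻¹ := by
    rw [hr, hcast1, Real.rpow_neg (by linarith), Real.sqrt_eq_rpow]
  have htpos : 0 < Real.sqrt ((q : ℝ) - 1) := Real.sqrt_pos.mpr (by linarith)
  have hVal : qMellinNorm q f
      = (((q : ℝ) - 2) * Real.sqrt q + 1) / Real.sqrt ((q : ℝ) - 1) := by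
    rw [hnorm, hcast2, hrval]
    field_simp
  rw [hVal]
  exact numeric_bound hn2
end
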